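/- With d = deg π and ψ_d := −U·(∂φ_d/∂U) ∈ A[U,V], the reductions ψ̄_d and φ̄_d share no common non-unit factor in 𝔽_𝔭[U,V]; that is, every polynomial dividing both φ̄_d and ψ̄_d is a unit. -/

import Mathlib

open MvPolynomial

/-- The isobaric polynomials `φ_d ∈ A[U,V]` (with `A = 𝔽_q[T]`), defined by the recursion
`φ_0 = 1`, `φ_1 = U − T^q·V`, and
`φ_d = φ_{d−1}·(U − T^q·V)^{q^{d−1}} + (T^{q^{d−1}} − T)·φ_{d−2}·(U^q·V)^{q^{d−2}}` for `d ≥ 2`.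
Here `U = X 0`, `V = X 1` and `T = Polynomial.X`. -/
noncomputable def phiPoly (Fq : Type) [Field Fq] (q : ℕ) :
    ℕ → MvPolynomial (Fin 2) (Polynomial Fq)
  | 0 => 1
  | 1 => X 0 - C (Polynomial.X ^ q) * X 1
  | (d + 2) =>
      phiPoly Fq q (d + 1) * (X 0 - C (Polynomial.X ^ q) * X 1) ^ q ^ (d + 1) +
        C (Polynomial.X ^ (q ^ (d + 1)) - Polynomial.X) * phiPoly Fq q d *
          (X 0 ^ q * X 1) ^ q ^ d

/-- The isobaric polynomial `ψ_d := −U·(∂φ_d/∂U) ∈ A[U,V]`, the unique isobaric polynomial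
with `∂(g_d) = ψ_d(Δ_W, Δ_T)·E_T`. -/
noncomputable def psiPoly (Fq : Type) [Field Fq] (q : ℕ) (d : ℕ) :
    MvPolynomial (Fin 2) (Polynomial Fq) :=
  - (X 0) * MvPolynomial.pderiv 0 (phiPoly Fq q d)

section Aux

variable (Fq : Type) [Field Fq] (q : ℕ)

lemma phiPoly_zero : phiPoly Fq q 0 = 1 := rfl

lemma phiPoly_one : phiPoly Fq q 1 = X 0 - C (Polynomial.X ^ q) * X 1 := rfl

lemma phiPoly_add_two (d : ℕ) :
    phiPoly Fq q (d + 2) =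
      phiPoly Fq q (d + 1) * (X 0 - C (Polynomial.X ^ q) * X 1) ^ q ^ (d + 1) +
        C (Polynomial.X ^ (q ^ (d + 1)) - Polynomial.X) * phiPoly Fq q d *
          (X 0 ^ q * X 1) ^ q ^ d := rfl

lemma cast_q_zero (hq0 : (q : Polynomial Fq) = 0) :
    ((q : ℕ) : MvPolynomial (Fin 2) (Polynomial Fq)) = 0 := by
  rw [← map_natCast (C : Polynomial Fq →+* MvPolynomial (Fin 2) (Polynomial Fq)) q, hq0,
    map_zero]

lemma pderiv_pow_q_zero (hq0 : (q : Polynomial Fq) = 0) (c : Polynomial Fq) (m : ℕ) :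
    pderiv (0 : Fin 2) ((X 0 - C c * X 1) ^ q ^ (m + 1)) = 0 := by
  rw [pderiv_pow]
  have h : ((q ^ (m + 1) : ℕ) : MvPolynomial (Fin 2) (Polynomial Fq)) = 0 := by
    rw [Nat.cast_pow, cast_q_zero Fq q hq0, zero_pow (Nat.succ_ne_zero m)]
  rw [h, zero_mul, zero_mul]

lemma pderiv_UqV_pow_zero (hq0 : (q : Polynomial Fq) = 0) (m : ℕ) :
    pderiv (0 : Fin 2) ((X 0 ^ q * X 1 : MvPolynomial (Fin 2) (Polynomial Fq)) ^ m) = 0 := by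
  have hinner : pderiv (0 : Fin 2)
      ((X 0 ^ q * X 1 : MvPolynomial (Fin 2) (Polynomial Fq))) = 0 := by
    rw [pderiv_mul, pderiv_pow, pderiv_X_self, cast_q_zero Fq q hq0,
      pderiv_X_of_ne (by decide : (1 : Fin 2) ≠ 0)]
    ring
  rw [pderiv_pow, hinner]
  ring

lemma pderiv_phiPoly_add_two (hq0 : (q : Polynomial Fq) = 0) (d : ℕ) :
    pderiv (0 : Fin 2) (phiPoly Fq q (d + 2)) =
      pderiv (0 : Fin 2) (phiPoly Fq q (d + 1)) *
          (X 0 - C (Polynomial.X ^ q) * X 1) ^ q ^ (d + 1) +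
        C (Polynomial.X ^ (q ^ (d + 1)) - Polynomial.X) *
          pderiv (0 : Fin 2) (phiPoly Fq q d) * (X 0 ^ q * X 1) ^ q ^ d := by
  rw [phiPoly_add_two, map_add, pderiv_mul, pderiv_pow_q_zero Fq q hq0,
    pderiv_mul, pderiv_mul, pderiv_C, pderiv_UqV_pow_zero Fq q hq0]
  ring

/-- The Wronskian identity: `φ_{d+1}·D_d − φ_d·D_{d+1}` telescopes to a monomial. -/
lemma phiPoly_wronskian (hq0 : (q : Polynomial Fq) = 0) (d : ℕ) :
    phiPoly Fq q (d + 1) * pderiv (0 : Fin 2) (phiPoly Fq q d) -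
      phiPoly Fq q d * pderiv (0 : Fin 2) (phiPoly Fq q (d + 1)) =
    C ((-1) ^ (d + 1) *
        ∏ i ∈ Finset.range d, (Polynomial.X ^ q ^ (i + 1) - Polynomial.X)) *
      (X 0 ^ q * X 1) ^ (∑ i ∈ Finset.range d, q ^ i) := by
  induction d with
  | zero =>
      simp [phiPoly_zero, phiPoly_one, pderiv_one, map_sub, pderiv_mul, pderiv_C,
        pderiv_X_self, pderiv_X_of_ne (by decide : (1 : Fin 2) ≠ 0)]
  | succ d ih =>
      rw [pderiv_phiPoly_add_two Fq q hq0, phiPoly_add_two,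
        Finset.prod_range_succ, Finset.sum_range_succ,
        pow_add (X 0 ^ q * X 1 : MvPolynomial (Fin 2) (Polynomial Fq))
          (∑ i ∈ Finset.range d, q ^ i) (q ^ d)]
      simp only [map_mul, map_pow, map_neg, map_one, map_prod] at ih ⊢
      linear_combination
        (-(C (Polynomial.X ^ q ^ (d + 1) - Polynomial.X)) * (X 0 ^ q * X 1) ^ q ^ d) * ih

/-- Evaluation of `φ_n` at `U = 0, V = 1` (through a ring map sending `T` to a nonzero
element of a field) is nonzero. -/
lemma eval_phiPoly_U0 {S : Type} [Field S] (f : Polynomial Fq →+* S)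
    (hqpos : q ≠ 0) (ht : f Polynomial.X ≠ 0) (n : ℕ) :
    eval₂ f (fun i => if i = 0 then 0 else 1) (phiPoly Fq q n) ≠ 0 := by
  set v : Fin 2 → S := fun i => if i = 0 then 0 else 1 with hv
  have hv0 : v 0 = 0 := rfl
  have hv1 : v 1 = 1 := rfl
  have key : ∀ n : ℕ, eval₂ f v (phiPoly Fq q n) ≠ 0 ∧
      eval₂ f v (phiPoly Fq q (n + 1)) ≠ 0 := by
    intro n
    induction n with
    | zero =>
        constructor
        · rw [phiPoly_zero, eval₂_one]; exact one_ne_zero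
        · rw [phiPoly_one, eval₂_sub, eval₂_mul, eval₂_C, eval₂_X, eval₂_X, hv0, hv1,
            map_pow, zero_sub, mul_one, neg_ne_zero]
          exact pow_ne_zero _ ht
    | succ n ihn =>
        refine ⟨ihn.2, ?_⟩
        rw [phiPoly_add_two]
        simp only [eval₂_add, eval₂_mul, eval₂_pow, eval₂_sub, eval₂_C, eval₂_X,
          hv0, hv1, mul_one, mul_zero, zero_sub, map_pow]
        rw [← pow_mul, zero_pow (Nat.mul_ne_zero hqpos (pow_ne_zero _ hqpos)),
          mul_zero, add_zero]
        exact mul_ne_zero ihn.2 (pow_ne_zero _ (neg_ne_zero.mpr (pow_ne_zero _ ht)))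
  exact (key n).1

/-- Evaluation of `φ_n` at `U = 1, V = 0` is `1`. -/
lemma eval_phiPoly_V0 {S : Type} [Field S] (f : Polynomial Fq →+* S)
    (hqpos : q ≠ 0) (n : ℕ) :
    eval₂ f (fun i => if i = 0 then 1 else 0) (phiPoly Fq q n) = 1 := by
  set v : Fin 2 → S := fun i => if i = 0 then 1 else 0 with hv
  have hv0 : v 0 = 1 := rfl
  have hv1 : v 1 = 0 := rfl
  have key : ∀ n : ℕ, eval₂ f v (phiPoly Fq q n) = 1 ∧
      eval₂ f v (phiPoly Fq q (n + 1)) = 1 := by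
    intro n
    induction n with
    | zero =>
        constructor
        · rw [phiPoly_zero, eval₂_one]
        · rw [phiPoly_one, eval₂_sub, eval₂_mul, eval₂_C, eval₂_X, eval₂_X, hv0, hv1,
            mul_zero, sub_zero]
    | succ n ihn =>
        refine ⟨ihn.2, ?_⟩
        rw [phiPoly_add_two]
        simp only [eval₂_add, eval₂_mul, eval₂_pow, eval₂_sub, eval₂_C, eval₂_X,
          hv0, hv1, mul_one, mul_zero, sub_zero, one_pow]
        rw [zero_pow (pow_ne_zero _ hqpos), mul_zero, add_zero]
        exact ihn.2
  exact (key n).1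

/-- `X 0` is prime in `MvPolynomial (Fin (n+1)) R` over a domain. -/
lemma prime_X0_mv (n : ℕ) (R : Type) [CommRing R] [IsDomain R] :
    Prime (X 0 : MvPolynomial (Fin (n + 1)) R) := by
  rw [← MulEquiv.prime_iff (MvPolynomial.finSuccEquiv R n).toRingEquiv.toMulEquiv]
  have h : (MvPolynomial.finSuccEquiv R n).toRingEquiv.toMulEquiv (X 0)
      = (Polynomial.X : Polynomial (MvPolynomial (Fin n) R)) := by
    show (MvPolynomial.finSuccEquiv R n) (X 0) = _
    exact MvPolynomial.finSuccEquiv_X_zero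
  rw [h]
  exact Polynomial.prime_X

/-- `X 0` and `X 1` are prime in `MvPolynomial (Fin 2) k` over a field. -/
lemma prime_X_fin2 {k : Type} [Field k] (j : Fin 2) :
    Prime (X j : MvPolynomial (Fin 2) k) := by
  have h0 : Prime (X 0 : MvPolynomial (Fin 2) k) := prime_X0_mv 1 k
  have h1 : Prime (X 1 : MvPolynomial (Fin 2) k) := by
    rw [← MulEquiv.prime_iff (MvPolynomial.finSuccEquiv k 1).toRingEquiv.toMulEquiv]
    have h : (MvPolynomial.finSuccEquiv k 1).toRingEquiv.toMulEquiv (X 1)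
        = Polynomial.C (X 0 : MvPolynomial (Fin 1) k) := by
      show (MvPolynomial.finSuccEquiv k 1) (X 1) = _
      have h10 : (1 : Fin 2) = Fin.succ 0 := rfl
      rw [h10]
      exact MvPolynomial.finSuccEquiv_X_succ
    rw [h, Polynomial.prime_C_iff]
    exact prime_X0_mv 0 k
  fin_cases j
  · exact h0
  · exact h1

end Aux

set_option maxHeartbeats 2000000 in
/-- With `d = deg π` and `ψ_d := −U·(∂φ_d/∂U)`, the reductions `ψ̄_d` and `φ̄_d` modulo `𝔭`
share no common non-unit factor in `𝔽_𝔭[U,V]`: every common divisor is a unit. -/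
theorem phiPoly_psiPoly_no_common_factor (p r q : ℕ) (hp : p.Prime) (hodd : Odd p)
    (hr : 0 < r) (hq : q = p ^ r)
    (Fq : Type) [Field Fq] [Fintype Fq] (hcard : Fintype.card Fq = q)
    (π : Polynomial Fq) (hmonic : π.Monic) (hirr : Irreducible π)
    (hne : π ≠ Polynomial.X) :
    ∀ a : MvPolynomial (Fin 2) (Polynomial Fq ⧸ Ideal.span {π}),
      a ∣ MvPolynomial.map (Ideal.Quotient.mk (Ideal.span {π})) (phiPoly Fq q π.natDegree) →
      a ∣ MvPolynomial.map (Ideal.Quotient.mk (Ideal.span {π})) (psiPoly Fq q π.natDegree) →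
      IsUnit a := by
  intro a hphi hpsi
  classical
  have he : 0 < π.natDegree := hirr.natDegree_pos
  have hq1 : 1 < q := by
    rw [hq]; exact Nat.one_lt_pow hr.ne' hp.one_lt
  have hqne0 : q ≠ 0 := by omega
  -- the quotient field
  haveI hmax : (Ideal.span {π}).IsMaximal := PrincipalIdealRing.isMaximal_of_irreducible hirr
  letI : Field (Polynomial Fq ⧸ Ideal.span {π}) := Ideal.Quotient.field (Ideal.span {π})
  set f : Polynomial Fq →+* Polynomial Fq ⧸ Ideal.span {π} :=
    Ideal.Quotient.mk (Ideal.span {π}) with hfdef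
  -- characteristic facts
  have hcharFq : (p : Fq) = 0 := by
    obtain ⟨n, hcprime, hcardc⟩ := FiniteField.card Fq (ringChar Fq)
    have hpr : p ^ r = ringChar Fq ^ (n : ℕ) := by rw [← hq, ← hcard, hcardc]
    have hdvd : p ∣ ringChar Fq ^ (n : ℕ) := hpr ▸ dvd_pow_self p hr.ne'
    have hpc : p = ringChar Fq :=
      (Nat.prime_dvd_prime_iff_eq hp hcprime).mp (hp.dvd_of_dvd_pow hdvd)
    rw [hpc]
    exact CharP.cast_eq_zero Fq (ringChar Fq)
  have hqFq : (q : Fq) = 0 := by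
    rw [hq]; push_cast; rw [hcharFq]; exact zero_pow hr.ne'
  have hq0 : (q : Polynomial Fq) = 0 := by
    rw [← map_natCast (Polynomial.C : Fq →+* Polynomial Fq) q, hqFq, map_zero]
  -- `t = f X` is nonzero
  have ht0 : f Polynomial.X ≠ 0 := by
    intro h
    rw [hfdef, Ideal.Quotient.eq_zero_iff_mem, Ideal.mem_span_singleton] at h
    exact hne (Polynomial.eq_of_monic_of_associated hmonic Polynomial.monic_X
      (hirr.associated_of_dvd Polynomial.irreducible_X h))
  -- characteristic of the quotient
  haveI hCharPk : CharP (Polynomial Fq ⧸ Ideal.span {π}) p := by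
    have hpk : (p : Polynomial Fq ⧸ Ideal.span {π}) = 0 := by
      rw [← map_natCast f p, ← map_natCast (Polynomial.C : Fq →+* Polynomial Fq) p,
        hcharFq, map_zero, map_zero]
    exact (CharP.charP_iff_prime_eq_zero hp).mpr hpk
  haveI : ExpChar (Polynomial Fq ⧸ Ideal.span {π}) p := ExpChar.prime hp
  -- `t^{q^i} ≠ t` for `1 ≤ i < deg π`
  have hall : ∀ i : ℕ, 1 ≤ i → i < π.natDegree →
      (f Polynomial.X) ^ q ^ i ≠ f Polynomial.X := by
    intro i h1 h2 heq
    set F := iterateFrobenius (Polynomial Fq ⧸ Ideal.span {π}) p (r * i) with hF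
    have hFx : ∀ x : Polynomial Fq ⧸ Ideal.span {π}, F x = x ^ q ^ i := by
      intro x; rw [hF, iterateFrobenius_def, hq, ← pow_mul]
    have hcomp : F.comp f = f := by
      apply Polynomial.ringHom_ext
      · intro c
        rw [RingHom.comp_apply, hFx, ← map_pow f, ← map_pow (Polynomial.C : Fq →+* Polynomial Fq)]
        have hc : c ^ q ^ i = c := by
          rw [← hcard]; exact FiniteField.pow_card_pow i c
        rw [hc]
      · rw [RingHom.comp_apply, hFx]; exact heq
    have hfix : ∀ x : Polynomial Fq ⧸ Ideal.span {π}, x ^ q ^ i = x := by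
      intro x
      obtain ⟨g, rfl⟩ := Ideal.Quotient.mk_surjective x
      calc (f g) ^ q ^ i = F (f g) := (hFx _).symm
        _ = f g := by rw [← RingHom.comp_apply, hcomp]
    -- the quotient has `q ^ deg π` distinct elements
    set ι : (Fin π.natDegree → Fq) → (Polynomial Fq ⧸ Ideal.span {π}) :=
      fun c => f (∑ j : Fin π.natDegree, Polynomial.C (c j) * Polynomial.X ^ (j : ℕ)) with hι
    have hinj : Function.Injective ι := by
      intro c c' hcc
      simp only [hι] at hcc
      have hsplit : (∑ j : Fin π.natDegree, Polynomial.C (c j - c' j) * Polynomial.X ^ (j : ℕ))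
          = (∑ j : Fin π.natDegree, Polynomial.C (c j) * Polynomial.X ^ (j : ℕ))
            - ∑ j : Fin π.natDegree, Polynomial.C (c' j) * Polynomial.X ^ (j : ℕ) := by
        rw [← Finset.sum_sub_distrib]
        exact Finset.sum_congr rfl fun j _ => by rw [map_sub, sub_mul]
      have hzero : f (∑ j : Fin π.natDegree, Polynomial.C (c j - c' j) * Polynomial.X ^ (j : ℕ)) = 0 := by
        rw [hsplit, map_sub, hcc, sub_self]
      rw [hfdef, Ideal.Quotient.eq_zero_iff_mem, Ideal.mem_span_singleton] at hzero
      have hdeg : (∑ j : Fin π.natDegree, Polynomial.C (c j - c' j) * Polynomial.X ^ (j : ℕ)).degree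
          < π.degree := by
        rw [Polynomial.degree_eq_natDegree hmonic.ne_zero]
        refine lt_of_le_of_lt (Polynomial.degree_sum_le _ _) ?_
        rw [Finset.sup_lt_iff (by exact_mod_cast WithBot.bot_lt_coe π.natDegree :
          (⊥ : WithBot ℕ) < (π.natDegree : WithBot ℕ))]
        intro j _
        refine lt_of_le_of_lt (Polynomial.degree_C_mul_X_pow_le _ _) ?_
        exact_mod_cast j.isLt
      have hgzero := Polynomial.eq_zero_of_dvd_of_degree_lt hzero hdeg
      funext j
      have hcoef := congrArg (fun P => Polynomial.coeff P (j : ℕ)) hgzero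
      simp only [Polynomial.finset_sum_coeff, Polynomial.coeff_C_mul, Polynomial.coeff_X_pow,
        Polynomial.coeff_zero] at hcoef
      rw [Finset.sum_eq_single j] at hcoef
      · rw [if_pos rfl, mul_one] at hcoef
        exact sub_eq_zero.mp hcoef
      · intro m _ hm
        rw [if_neg (fun h => hm (Fin.ext h.symm)), mul_zero]
      · intro hj; exact absurd (Finset.mem_univ j) hj
    set s : Finset (Polynomial Fq ⧸ Ideal.span {π}) := Finset.image ι Finset.univ with hs
    have hscard : s.card = q ^ π.natDegree := by
      rw [hs, Finset.card_image_of_injective _ hinj, Finset.card_univ, Fintype.card_fun,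
        Fintype.card_fin, hcard]
    set G : Polynomial (Polynomial Fq ⧸ Ideal.span {π}) :=
      Polynomial.X ^ (q ^ i) - Polynomial.X with hG
    have h1q : 1 < q ^ i := Nat.one_lt_pow (by omega : i ≠ 0) hq1
    have hGmonic : G.Monic := by
      refine Polynomial.monic_X_pow_sub ?_
      rw [Polynomial.degree_X]
      exact_mod_cast h1q
    have hGdeg : G.natDegree = q ^ i := by
      rw [hG, Polynomial.natDegree_sub_eq_left_of_natDegree_lt, Polynomial.natDegree_X_pow]
      rw [Polynomial.natDegree_X, Polynomial.natDegree_X_pow]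
      exact h1q
    have hsub : s ⊆ G.roots.toFinset := by
      intro x hx
      rw [Multiset.mem_toFinset, Polynomial.mem_roots']
      refine ⟨hGmonic.ne_zero, ?_⟩
      show Polynomial.eval x G = 0
      rw [hG, Polynomial.eval_sub, Polynomial.eval_pow, Polynomial.eval_X, hfix, sub_self]
    have hle : s.card ≤ q ^ i := by
      calc s.card ≤ G.roots.toFinset.card := Finset.card_le_card hsub
        _ ≤ Multiset.card G.roots := Multiset.toFinset_card_le _
        _ ≤ G.natDegree := Polynomial.card_roots' G
        _ = q ^ i := hGdeg
    rw [hscard] at hle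
    exact absurd hle (not_le.mpr (Nat.pow_lt_pow_right hq1 h2))
  -- the Wronskian certificate
  have hee : π.natDegree - 1 + 1 = π.natDegree := Nat.succ_pred_eq_of_pos he
  have W := phiPoly_wronskian Fq q hq0 (π.natDegree - 1)
  rw [hee] at W
  have W2 := congrArg (MvPolynomial.map f) W
  simp only [map_sub, map_mul, map_pow, MvPolynomial.map_C, MvPolynomial.map_X] at W2
  set cst : Polynomial Fq ⧸ Ideal.span {π} :=
    f ((-1) ^ π.natDegree *
      ∏ i ∈ Finset.range (π.natDegree - 1), (Polynomial.X ^ q ^ (i + 1) - Polynomial.X)) with hcst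
  have hCcst : (C cst : MvPolynomial (Fin 2) (Polynomial Fq ⧸ Ideal.span {π})) =
      C (f (-1)) ^ π.natDegree *
        C (f (∏ i ∈ Finset.range (π.natDegree - 1),
          (Polynomial.X ^ q ^ (i + 1) - Polynomial.X))) := by
    rw [hcst, map_mul, map_pow, MvPolynomial.C_mul, MvPolynomial.C_pow]
  rw [← hCcst] at W2
  have hcst0 : cst ≠ 0 := by
    rw [hcst, map_mul, map_pow, map_neg, map_one, map_prod]
    refine mul_ne_zero (pow_ne_zero _ (neg_ne_zero.mpr one_ne_zero)) ?_
    rw [Finset.prod_ne_zero_iff]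
    intro i hi
    rw [Finset.mem_range] at hi
    rw [map_sub, map_pow]
    exact sub_ne_zero.mpr (hall (i + 1) (Nat.succ_le_succ (Nat.zero_le i)) (by omega))
  set N : ℕ := ∑ i ∈ Finset.range (π.natDegree - 1), q ^ i with hN
  have hpsi' : a ∣ -(X 0 : MvPolynomial (Fin 2) (Polynomial Fq ⧸ Ideal.span {π})) *
      MvPolynomial.map f (pderiv 0 (phiPoly Fq q π.natDegree)) := by
    have hmappsi : MvPolynomial.map f (psiPoly Fq q π.natDegree) =
        -(X 0) * MvPolynomial.map f (pderiv 0 (phiPoly Fq q π.natDegree)) := by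
      rw [psiPoly, map_mul, map_neg, MvPolynomial.map_X]
    rwa [hmappsi] at hpsi
  have hdvd1 : a ∣ C cst * (X 0 * (X 0 ^ q * X 1) ^ N) := by
    have hcomb : C cst * (X 0 * (X 0 ^ q * X 1) ^ N) =
        (X 0 * MvPolynomial.map f (pderiv 0 (phiPoly Fq q (π.natDegree - 1)))) *
            MvPolynomial.map f (phiPoly Fq q π.natDegree) +
          MvPolynomial.map f (phiPoly Fq q (π.natDegree - 1)) *
            (-(X 0) * MvPolynomial.map f (pderiv 0 (phiPoly Fq q π.natDegree))) := by
      linear_combination (-(X 0) : MvPolynomial (Fin 2) (Polynomial Fq ⧸ Ideal.span {π})) * W2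
    rw [hcomb]
    exact dvd_add (hphi.mul_left _) (hpsi'.mul_left _)
  have hdvd2 : a ∣ X 0 * (X 0 ^ q * X 1) ^ N := by
    have hrw : (X 0 * (X 0 ^ q * X 1) ^ N : MvPolynomial (Fin 2) (Polynomial Fq ⧸ Ideal.span {π}))
        = C cst⁻¹ * (C cst * (X 0 * (X 0 ^ q * X 1) ^ N)) := by
      rw [← mul_assoc, ← MvPolynomial.C_mul, inv_mul_cancel₀ hcst0, MvPolynomial.C_1, one_mul]
    rw [hrw]
    exact hdvd1.mul_left _
  -- conclude
  by_contra hUnit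
  have ha0 : a ≠ 0 := by
    rintro rfl
    rw [zero_dvd_iff] at hdvd2
    exact (mul_ne_zero (MvPolynomial.X_ne_zero _)
      (pow_ne_zero _ (mul_ne_zero (pow_ne_zero _ (MvPolynomial.X_ne_zero _))
        (MvPolynomial.X_ne_zero _)))) hdvd2
  obtain ⟨b, hbirr, hba⟩ := WfDvdMonoid.exists_irreducible_factor hUnit ha0
  have hbprime : Prime b := (UniqueFactorizationMonoid.irreducible_iff_prime).mp hbirr
  have hbmon : b ∣ X 0 * (X 0 ^ q * X 1) ^ N := hba.trans hdvd2
  have hbX : b ∣ (X 0 : MvPolynomial (Fin 2) (Polynomial Fq ⧸ Ideal.span {π})) ∨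
      b ∣ (X 1 : MvPolynomial (Fin 2) (Polynomial Fq ⧸ Ideal.span {π})) := by
    rcases hbprime.2.2 _ _ hbmon with h | h
    · exact Or.inl h
    · rcases hbprime.2.2 _ _ (hbprime.dvd_of_dvd_pow h) with h' | h'
      · exact Or.inl (hbprime.dvd_of_dvd_pow h')
      · exact Or.inr h'
  have hXdvd : ∀ j : Fin 2, b ∣ X j →
      (X j : MvPolynomial (Fin 2) (Polynomial Fq ⧸ Ideal.span {π})) ∣
        MvPolynomial.map f (phiPoly Fq q π.natDegree) := by
    intro j hbj
    have hassoc := hbirr.associated_of_dvd (prime_X_fin2 j).irreducible hbj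
    exact (hassoc.symm.dvd).trans (hba.trans hphi)
  rcases hbX with h | h
  · obtain ⟨w, hw⟩ := hXdvd 0 h
    have h0 : eval₂ f (fun i : Fin 2 => if i = 0 then 0 else 1)
        (phiPoly Fq q π.natDegree) = 0 := by
      rw [← MvPolynomial.eval_map, hw]
      simp
    exact eval_phiPoly_U0 Fq q f hqne0 ht0 π.natDegree h0
  · obtain ⟨w, hw⟩ := hXdvd 1 h
    have h0 : eval₂ f (fun i : Fin 2 => if i = 0 then 1 else 0)
        (phiPoly Fq q π.natDegree) = 0 := by
      rw [← MvPolynomial.eval_map, hw]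
      simp
    rw [eval_phiPoly_V0 Fq q f hqne0 π.natDegree] at h0
    exact one_ne_zero h0
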